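/- Let K be a field of characteristic zero and let φ be any K-algebra endomorphism of the polynomial ring K[x]. Then the image of the map δ = I - φ (where I is the identity map of K[x]) is a Mathieu subspace of K[x]. -/

import Mathlib

open Polynomial

open Finset

lemma powsum_zero {F : Type*} [Field F] [CharZero F] {ι : Type*} (s : Finset ι) (f : ι → F)
    (h : ∀ m : ℕ, 1 ≤ m → m ≤ s.card → ∑ i ∈ s, f i ^ m = 0) :
    ∀ i ∈ s, f i = 0 := by
  classical
  by_contra hcon
  push_neg at hcon
  obtain ⟨i0, hi0, hfi0⟩ := hcon
  set T : Finset F := (s.image f).erase 0 with hT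
  have hTne : T.Nonempty := ⟨f i0, by simp [hT, hfi0, Finset.mem_image.2 ⟨i0, hi0, rfl⟩]⟩
  have hTcard : T.card ≤ s.card := le_trans (Finset.card_le_card (Finset.erase_subset _ _)) Finset.card_image_le
  have key : ∀ m : ℕ, 1 ≤ m → m ≤ s.card →
      ∑ β ∈ T, ((s.filter (fun i => f i = β)).card : F) * β ^ m = 0 := by
    intro m hm1 hm2
    have h1 : ∑ i ∈ s, f i ^ m = ∑ β ∈ s.image f, ∑ i ∈ s.filter (fun i => f i = β), f i ^ m :=
      (Finset.sum_fiberwise_of_maps_to (fun x hx => Finset.mem_image_of_mem f hx) _).symm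
    have h2 : ∀ β ∈ s.image f, ∑ i ∈ s.filter (fun i => f i = β), f i ^ m
        = ((s.filter (fun i => f i = β)).card : F) * β ^ m := by
      intro β _
      rw [Finset.sum_congr rfl (fun i hi => by rw [(Finset.mem_filter.1 hi).2]),
        Finset.sum_const, nsmul_eq_mul]
    have h3 : ∑ β ∈ s.image f, ((s.filter (fun i => f i = β)).card : F) * β ^ m = 0 := by
      rw [← Finset.sum_congr rfl h2, ← h1]; exact h m hm1 hm2
    by_cases h0 : (0 : F) ∈ s.image f
    · rw [← Finset.add_sum_erase _ _ h0, zero_pow (by omega), mul_zero, zero_add] at h3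
      exact h3
    · rw [hT, Finset.erase_eq_of_notMem h0]
      exact h3
  set r := T.card with hr
  have hrpos : 0 < r := Finset.card_pos.2 hTne
  set β : Fin r → F := fun j => ((T.equivFin.symm j : T) : F) with hβ
  have hβinj : Function.Injective β := by
    intro j1 j2 hj
    exact T.equivFin.symm.injective (Subtype.ext hj)
  have hβmem : ∀ j, β j ∈ T := fun j => (T.equivFin.symm j).2
  have hβne : ∀ j, β j ≠ 0 := fun j => Finset.ne_of_mem_erase (hβmem j)
  set v : Fin r → F := fun j => ((s.filter (fun i => f i = β j)).card : F) with hv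
  have hvj : ∀ j, v j ≠ 0 := by
    intro j
    have hm : β j ∈ s.image f := Finset.mem_of_mem_erase (hβmem j)
    obtain ⟨i, hi, hfi⟩ := Finset.mem_image.1 hm
    have hpos : 0 < (s.filter (fun i => f i = β j)).card :=
      Finset.card_pos.2 ⟨i, Finset.mem_filter.2 ⟨hi, hfi⟩⟩
    exact Nat.cast_ne_zero.mpr hpos.ne'
  set M : Matrix (Fin r) (Fin r) F := Matrix.diagonal β * Matrix.vandermonde β with hM
  have hMe : ∀ i j, M i j = β i ^ ((j : ℕ) + 1) := by
    intro i j
    rw [hM, Matrix.diagonal_mul, Matrix.vandermonde, pow_succ']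
    rfl
  have hMv : Matrix.vecMul v M = 0 := by
    funext j
    have hj2 : (j : ℕ) + 1 ≤ s.card := le_trans (Nat.succ_le_of_lt j.2) hTcard
    have hkey := key ((j : ℕ) + 1) (Nat.le_add_left 1 _) hj2
    set g : F → F := fun x => ((s.filter (fun i => f i = x)).card : F) * x ^ ((j : ℕ) + 1) with hg
    have e1 : ∑ x : {x // x ∈ T}, g ↑x = ∑ b ∈ T, g b := T.sum_coe_sort g
    have e2 : ∑ i : Fin r, g (β i) = ∑ x : {x // x ∈ T}, g ↑x :=
      Equiv.sum_comp T.equivFin.symm (fun x => g ↑x)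
    have e3 : ∑ i : Fin r, g (β i) = 0 := by rw [e2, e1]; exact hkey
    calc Matrix.vecMul v M j = ∑ i : Fin r, v i * M i j := rfl
    _ = ∑ i : Fin r, g (β i) := by
        refine Finset.sum_congr rfl fun i _ => ?_
        rw [hMe, hg, hv]
    _ = 0 := e3
  have hdet : M.det ≠ 0 := by
    rw [hM, Matrix.det_mul, Matrix.det_diagonal]
    exact mul_ne_zero (Finset.prod_ne_zero_iff.2 fun j _ => hβne j)
      (Matrix.det_vandermonde_ne_zero_iff.2 hβinj)
  have := Matrix.eq_zero_of_vecMul_eq_zero hdet hMv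
  exact hvj ⟨0, hrpos⟩ (congrFun this _)

lemma powsum_exists_ne {F : Type*} [Field F] [CharZero F] {ι : Type*} (s : Finset ι) (f : ι → F)
    (hne : s.Nonempty) (hf : ∀ i ∈ s, f i ≠ 0) :
    ∃ m : ℕ, 1 ≤ m ∧ m ≤ s.card ∧ ∑ i ∈ s, f i ^ m ≠ 0 := by
  by_contra hcon
  push_neg at hcon
  obtain ⟨i, hi⟩ := hne
  exact hf i hi (powsum_zero s f (fun m h1 h2 => hcon m h1 h2) i hi)

section Poly
variable {K : Type*} [Field K]

/-- iterates of `p` under composition -/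

noncomputable def pk (p : Polynomial K) : ℕ → Polynomial K
  | 0 => X
  | n + 1 => p.comp (pk p n)

lemma pk_zero (p : Polynomial K) : pk p 0 = X := rfl

lemma pk_succ (p : Polynomial K) (n : ℕ) : pk p (n+1) = p.comp (pk p n) := rfl

lemma comp_sub_dvd (f q : Polynomial K) : (q - X) ∣ (f.comp q - f) := by
  induction f using Polynomial.induction_on' with
  | add p r hp hr =>
      have : (p + r).comp q - (p + r) = (p.comp q - p) + (r.comp q - r) := by
        rw [add_comp]; ring
      rw [this]; exact dvd_add hp hr
  | monomial n a =>
      rw [monomial_comp]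
      have : (monomial n a : Polynomial K) = C a * X ^ n := by
        rw [C_mul_X_pow_eq_monomial]
      rw [this]
      have h2 : C a * q ^ n - C a * X ^ n = C a * (q ^ n - X ^ n) := by ring
      rw [h2]
      exact Dvd.dvd.mul_left (sub_dvd_pow_sub_pow q X n) (C a)

lemma telescope_comp (p f : Polynomial K) (k : ℕ) :
    ∑ i ∈ range k, (f - f.comp p).comp (pk p i) = f - f.comp (pk p k) := by
  induction k with
  | zero => simp [pk_zero]
  | succ n ih =>
      rw [Finset.sum_range_succ, ih, sub_comp, pk_succ, ← comp_assoc]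
      ring

lemma natDegree_pk (p : Polynomial K) (n : ℕ) : (pk p n).natDegree = p.natDegree ^ n := by
  induction n with
  | zero => simp [pk_zero]
  | succ n ih => rw [pk_succ, natDegree_comp, ih, pow_succ]; ring

end Poly

lemma mult_le_of_powsum_dvd {F : Type*} [Field F] [CharZero F] (c : F) (k e : ℕ)
    (A : ℕ → Polynomial F) (hA : ∀ i ∈ range k, A i ≠ 0)
    (h : ∀ m : ℕ, 1 ≤ m → m ≤ k → (X - C c) ^ e ∣ ∑ i ∈ range k, A i ^ m) :
    ∀ i ∈ range k, e ≤ k * rootMultiplicity c (A i) := by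
  classical
  intro i0 hi0
  have hk : 0 < k := by
    have := Finset.mem_range.1 hi0; omega
  have hne : ((range k).image (fun i => rootMultiplicity c (A i))).Nonempty :=
    Finset.Nonempty.image ⟨i0, hi0⟩ _
  obtain ⟨t, htmem, htmin⟩ : ∃ t, t ∈ (range k).image (fun i => rootMultiplicity c (A i)) ∧
      ∀ i ∈ range k, t ≤ rootMultiplicity c (A i) := by
    refine ⟨((range k).image _).min' hne, Finset.min'_mem _ hne, fun i hi => ?_⟩
    exact Finset.min'_le _ _ (Finset.mem_image_of_mem _ hi)
  set S := (range k).filter (fun i => rootMultiplicity c (A i) = t) with hS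
  have hsub : S ⊆ range k := Finset.filter_subset _ _
  have hSne : S.Nonempty := by
    obtain ⟨i, hi, hvi⟩ := Finset.mem_image.1 htmem
    exact ⟨i, Finset.mem_filter.2 ⟨hi, hvi⟩⟩
  set B : ℕ → Polynomial F := fun i => A i /ₘ (X - C c) ^ (rootMultiplicity c (A i)) with hB
  have hfact : ∀ i ∈ range k, A i = (X - C c) ^ (rootMultiplicity c (A i)) * B i := fun i hi =>
    (pow_mul_divByMonic_rootMultiplicity_eq (A i) c).symm
  have hαne : ∀ i ∈ S, (B i).eval c ≠ 0 := fun i hi =>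
    eval_divByMonic_pow_rootMultiplicity_ne_zero c (hA i (hsub hi))
  obtain ⟨m, hm1, hmS, hsum_ne⟩ := powsum_exists_ne S (fun i => (B i).eval c) hSne hαne
  have hmk : m ≤ k := le_trans hmS (by simpa using Finset.card_le_card hsub)
  have hsplit : ∑ i ∈ range k, A i ^ m
      = ∑ i ∈ (range k) \ S, A i ^ m + (X - C c) ^ (t * m) * (∑ i ∈ S, B i ^ m) := by
    rw [← Finset.sum_sdiff hsub]
    congr 1
    rw [Finset.mul_sum]
    refine Finset.sum_congr rfl fun i hi => ?_
    have hiS := Finset.mem_filter.1 hi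
    rw [hfact i (hsub hi), mul_pow, ← pow_mul, hiS.2]
  have hdvd2 : (X - C c) ^ (t * m + 1) ∣ ∑ i ∈ (range k) \ S, A i ^ m := by
    refine Finset.dvd_sum fun i hi => ?_
    obtain ⟨hik, hiS⟩ := Finset.mem_sdiff.1 hi
    have hvi : t < rootMultiplicity c (A i) := by
      rcases lt_or_eq_of_le (htmin i hik) with h' | h'
      · exact h'
      · refine absurd ?_ hiS
        rw [hS]
        exact Finset.mem_filter.2 ⟨hik, h'.symm⟩
    have hle : t * m + 1 ≤ rootMultiplicity c (A i) * m := by nlinarith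
    calc (X - C c) ^ (t * m + 1) ∣ (X - C c) ^ (rootMultiplicity c (A i) * m) :=
        pow_dvd_pow _ hle
    _ ∣ A i ^ m := by
        rw [pow_mul]; exact pow_dvd_pow_of_dvd (pow_rootMultiplicity_dvd (A i) c) m
  obtain ⟨R, hR⟩ := hdvd2
  have hQeq : ∑ i ∈ range k, A i ^ m
      = (X - C c) ^ (t * m) * ((∑ i ∈ S, B i ^ m) + (X - C c) * R) := by
    rw [hsplit, hR, pow_succ]
    ring
  have hGev : ((∑ i ∈ S, B i ^ m) + (X - C c) * R).eval c ≠ 0 := by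
    simpa [eval_finset_sum, eval_add, eval_mul, eval_pow, eval_sub, eval_X, eval_C] using hsum_ne
  have hGne : (∑ i ∈ S, B i ^ m) + (X - C c) * R ≠ 0 := fun h0 => hGev (by rw [h0]; simp)
  have hQne : ∑ i ∈ range k, A i ^ m ≠ 0 := by
    rw [hQeq]
    exact mul_ne_zero (pow_ne_zero _ (X_sub_C_ne_zero c)) hGne
  have hrm : rootMultiplicity c (∑ i ∈ range k, A i ^ m) = t * m := by
    rw [hQeq, rootMultiplicity_mul (hQeq ▸ hQne), rootMultiplicity_X_sub_C_pow,
      rootMultiplicity_eq_zero (by simpa [IsRoot] using hGev), add_zero]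
  have he : e ≤ t * m := by
    rw [← hrm]
    exact (le_rootMultiplicity_iff hQne).2 (h m hm1 hmk)
  calc e ≤ t * m := he
  _ ≤ t * k := Nat.mul_le_mul_left t hmk
  _ ≤ rootMultiplicity c (A i0) * k := Nat.mul_le_mul_right k (htmin i0 hi0)
  _ = k * rootMultiplicity c (A i0) := Nat.mul_comm _ _

lemma count_sum_le {F : Type*} [DecidableEq F] (T : Finset F) (s : Multiset F) :
    ∑ c ∈ T, s.count c ≤ Multiset.card s := by
  have h1 : ∑ c ∈ T, s.count c = ∑ c ∈ T ∩ s.toFinset, s.count c := by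
    refine (Finset.sum_subset Finset.inter_subset_left ?_).symm
    intro c hc hnc
    have hns : c ∉ s.toFinset := fun h => hnc (Finset.mem_inter.2 ⟨hc, h⟩)
    exact Multiset.count_eq_zero.2 (by simpa [Multiset.mem_toFinset] using hns)
  rw [h1, ← Multiset.toFinset_sum_count_eq s]
  exact Finset.sum_le_sum_of_subset Finset.inter_subset_right

lemma arith (n : ℕ) : (4 * (n + 1)) * n < 2 ^ (4 * (n + 1)) := by
  have h1 : 2 * (n + 1) < 2 ^ (2 * (n + 1)) := Nat.lt_two_pow_self
  have h2 : (2 * (n + 1)) ^ 2 < (2 ^ (2 * (n + 1))) ^ 2 :=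
    Nat.pow_lt_pow_left h1 (by norm_num)
  have h3 : (2 ^ (2 * (n + 1))) ^ 2 = 2 ^ (4 * (n + 1)) := by
    rw [← pow_mul]; ring_nf
  nlinarith [h2, h3]

lemma caseB {K : Type*} [Field K] [CharZero K] (p : Polynomial K) (hd : 2 ≤ p.natDegree)
    (a : Polynomial K) (ha : ∀ m : ℕ, 1 ≤ m → ∃ f : Polynomial K, a ^ m = f - f.comp p) :
    a = 0 := by
  classical
  by_contra han
  set n := a.natDegree with hn
  set k := 4 * (n + 1) with hk
  have hk1 : 1 ≤ k := by omega
  set d := p.natDegree with hd'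
  -- divisibility in K[X]
  have key : ∀ m : ℕ, 1 ≤ m →
      (pk p k - X) ∣ ∑ i ∈ range k, (a.comp (pk p i)) ^ m := by
    intro m hm
    obtain ⟨f, hf⟩ := ha m hm
    have h1 : ∑ i ∈ range k, (a ^ m).comp (pk p i) = f - f.comp (pk p k) := by
      rw [hf]; exact telescope_comp p f k
    have h2 : ∑ i ∈ range k, (a.comp (pk p i)) ^ m = f - f.comp (pk p k) := by
      rw [← h1]; exact Finset.sum_congr rfl fun i _ => (pow_comp a (pk p i) m).symm
    rw [h2]
    have := comp_sub_dvd f (pk p k)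
    rwa [← dvd_neg, neg_sub] at this
  -- pass to the algebraic closure
  set F := AlgebraicClosure K
  set ι := algebraMap K F
  set W := (pk p k - X).map ι with hW
  have hpk_deg : (pk p k).natDegree = d ^ k := natDegree_pk p k
  have h2k : 2 ^ k ≤ d ^ k := Nat.pow_le_pow_left hd k
  have hdk2 : 2 ≤ d ^ k := by
    calc (2:ℕ) = 2 ^ 1 := by norm_num
    _ ≤ 2 ^ k := Nat.pow_le_pow_right (by norm_num) hk1
    _ ≤ d ^ k := h2k
  have hWdeg : W.natDegree = d ^ k := by
    rw [hW, natDegree_map,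
      natDegree_sub_eq_left_of_natDegree_lt (by rw [hpk_deg, natDegree_X]; omega), hpk_deg]
  have hWne : W ≠ 0 := fun h0 => by
    rw [h0, natDegree_zero] at hWdeg; omega
  set atil := a.map ι with hatil
  have hatil_ne : atil ≠ 0 := Polynomial.map_ne_zero han
  have hatil_deg : atil.natDegree = n := by rw [hatil, natDegree_map, hn]
  set A : ℕ → Polynomial F := fun i => (a.comp (pk p i)).map ι with hA
  have hAne : ∀ i ∈ range k, A i ≠ 0 := by
    intro i _
    refine Polynomial.map_ne_zero ?_
    intro h0
    rcases comp_eq_zero_iff.1 h0 with h' | h'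
    · exact han h'
    · have hdeg := natDegree_pk p i
      have h1 : (pk p i).natDegree = 0 := by rw [h'.2]; exact natDegree_C _
      have h2 : 1 ≤ p.natDegree ^ i := Nat.one_le_pow _ _ (by omega)
      omega
  have hA0 : A 0 = atil := by
    show Polynomial.map ι (a.comp (pk p 0)) = atil
    rw [pk_zero, comp_X]
  -- per-root inequality
  have hroot : ∀ c ∈ W.roots.toFinset, rootMultiplicity c W ≤ k * rootMultiplicity c atil := by
    intro c _
    have hdvd : ∀ m : ℕ, 1 ≤ m → m ≤ k →
        (X - C c) ^ (rootMultiplicity c W) ∣ ∑ i ∈ range k, A i ^ m := by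
      intro m hm _
      refine dvd_trans (pow_rootMultiplicity_dvd W c) ?_
      have hmap := Polynomial.map_dvd ι (key m hm)
      simpa [hW, hA, Polynomial.map_sum, Polynomial.map_pow] using hmap
    have := mult_le_of_powsum_dvd c k (rootMultiplicity c W) A hAne hdvd 0
      (Finset.mem_range.2 (by omega))
    rwa [hA0] at this
  -- sum up
  have hsplits : Splits W := IsAlgClosed.splits W
  have hcard : W.roots.card = d ^ k := by
    have := hsplits.natDegree_eq_card_roots
    rw [← this, hWdeg]
  have hsum1 : ∑ c ∈ W.roots.toFinset, rootMultiplicity c W = d ^ k := by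
    have := Multiset.toFinset_sum_count_eq W.roots
    rw [← hcard, ← this]
    exact Finset.sum_congr rfl fun c _ => (count_roots W).symm
  have hsum2 : ∑ c ∈ W.roots.toFinset, rootMultiplicity c atil ≤ n := by
    calc ∑ c ∈ W.roots.toFinset, rootMultiplicity c atil
        = ∑ c ∈ W.roots.toFinset, atil.roots.count c :=
          Finset.sum_congr rfl fun c _ => (count_roots atil).symm
    _ ≤ atil.roots.card := count_sum_le _ _
    _ ≤ atil.natDegree := card_roots' atil
    _ = n := hatil_deg
  have hfinal : d ^ k ≤ k * n := by
    calc d ^ k = ∑ c ∈ W.roots.toFinset, rootMultiplicity c W := hsum1.symm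
    _ ≤ ∑ c ∈ W.roots.toFinset, k * rootMultiplicity c atil :=
        Finset.sum_le_sum hroot
    _ = k * ∑ c ∈ W.roots.toFinset, rootMultiplicity c atil := by rw [Finset.mul_sum]
    _ ≤ k * n := Nat.mul_le_mul_left k hsum2
  have h5 : k * n < 2 ^ k := by rw [hk]; exact arith n
  omega

lemma caseA {K : Type*} [Field K] [CharZero K] (p : Polynomial K) (r : ℕ) (hr : 1 ≤ r)
    (hpr : pk p r = X) (a : Polynomial K)
    (ha : ∀ m : ℕ, 1 ≤ m → ∃ f : Polynomial K, a ^ m = f - f.comp p) :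
    a = 0 := by
  classical
  have key : ∀ m : ℕ, 1 ≤ m → ∑ i ∈ range r, (a.comp (pk p i)) ^ m = 0 := by
    intro m hm
    obtain ⟨f, hf⟩ := ha m hm
    have h1 : ∑ i ∈ range r, (a ^ m).comp (pk p i) = f - f.comp (pk p r) := by
      rw [hf]; exact telescope_comp p f r
    have h2 : ∑ i ∈ range r, (a.comp (pk p i)) ^ m = f - f.comp (pk p r) := by
      rw [← h1]; exact Finset.sum_congr rfl fun i _ => (pow_comp a (pk p i) m).symm
    rw [h2, hpr, comp_X, sub_self]
  set L := FractionRing (Polynomial K)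
  have hinj : Function.Injective (algebraMap (Polynomial K) L) :=
    IsFractionRing.injective _ _
  haveI : CharZero L :=
    charZero_of_injective_algebraMap hinj
  have hz := powsum_zero (F := L) (range r)
    (fun i => algebraMap (Polynomial K) L (a.comp (pk p i)))
    (by
      intro m hm1 hm2
      have := congrArg (algebraMap (Polynomial K) L) (key m hm1)
      simpa [map_sum, map_pow] using this)
    0 (Finset.mem_range.2 (by omega))
  have : a.comp (pk p 0) = 0 := hinj (by simpa using hz)
  rwa [pk_zero, comp_X] at this

lemma span_all {K : Type*} [Field K] (V : Submodule K (Polynomial K)) (u : ℕ → Polynomial K)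
    (hu : ∀ n, u n ∈ V) (h0 : ∀ n, u n ≠ 0) (hdeg : ∀ n, (u n).natDegree = n) :
    ∀ g : Polynomial K, g ∈ V := by
  intro g
  generalize hn : g.natDegree = n
  induction n using Nat.strong_induction_on generalizing g with
  | _ n ih =>
    by_cases hg : g = 0
    · rw [hg]; exact V.zero_mem
    · set cc := g.leadingCoeff / (u n).leadingCoeff with hcc
      have hun : (u n).leadingCoeff ≠ 0 := leadingCoeff_ne_zero.2 (h0 n)
      have hgl : g.leadingCoeff ≠ 0 := leadingCoeff_ne_zero.2 hg
      have hccne : cc ≠ 0 := div_ne_zero hgl hun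
      have hdegeq : g.degree = (C cc * u n).degree := by
        rw [degree_C_mul hccne, degree_eq_natDegree (h0 n), degree_eq_natDegree hg, hdeg n, hn]
      have hlead : g.leadingCoeff = (C cc * u n).leadingCoeff := by
        rw [leadingCoeff_mul, leadingCoeff_C, hcc, div_mul_cancel₀ _ hun]
      have humem : C cc * u n ∈ V := by
        rw [← smul_eq_C_mul]; exact V.smul_mem cc (hu n)
      by_cases hsub : g - C cc * u n = 0
      · have hge : g = C cc * u n := by rwa [sub_eq_zero] at hsub
        rw [hge]; exact humem
      · have hlt : (g - C cc * u n).degree < g.degree := degree_sub_lt hdegeq hg hlead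
        have hnat : (g - C cc * u n).natDegree < n := by
          have := natDegree_lt_natDegree hsub hlt
          omega
        have hmem : g - C cc * u n ∈ V := ih _ hnat _ rfl
        have : g = (g - C cc * u n) + C cc * u n := by ring
        rw [this]; exact V.add_mem hmem humem

lemma mem_of_eval_zero {K : Type*} [Field K] (V : Submodule K (Polynomial K)) (c : K)
    (hpow : ∀ n : ℕ, 1 ≤ n → (X - C c) ^ n ∈ V) :
    ∀ g : Polynomial K, g.eval c = 0 → g ∈ V := by
  intro g hg
  have hsum := sum_taylor_eq g c
  rw [← hsum]
  rw [Polynomial.sum]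
  refine V.sum_mem fun i hi => ?_
  by_cases hi0 : i = 0
  · rw [hi0]
    have : (taylor c g).coeff 0 = 0 := by rw [taylor_coeff_zero, hg]
    rw [this]
    simp
  · rw [← smul_eq_C_mul]
    exact V.smul_mem _ (hpow i (by omega))

lemma pk_affine {K : Type*} [Field K] (α c : K) (p : Polynomial K)
    (hpc : p = C α * (X - C c) + C c) (n : ℕ) :
    pk p n = C (α ^ n) * (X - C c) + C c := by
  induction n with
  | zero => rw [pk_zero]; simp
  | succ n ih =>
      rw [pk_succ, ih]
      conv_lhs => rw [hpc]
      rw [add_comp, mul_comp, C_comp, sub_comp, X_comp, C_comp]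
      have h1 : (C (α ^ n) * (X - C c) + C c) - C c = C (α ^ n) * (X - C c) := by ring
      rw [h1, ← mul_assoc, ← C_mul, ← pow_succ']

/-- A `K`-subspace `V` of `K[x]` is a Mathieu subspace if for all `a, b ∈ K[x]` with
`a^m ∈ V` for all `m ≥ 1`, one has `a^m b ∈ V` for all sufficiently large `m`. -/
def IsMathieuSubspace {K : Type*} [Field K] (V : Submodule K (Polynomial K)) : Prop :=
  ∀ a b : Polynomial K, (∀ m : ℕ, 1 ≤ m → a ^ m ∈ V) →
    ∃ N : ℕ, ∀ m : ℕ, N ≤ m → a ^ m * b ∈ V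

theorem image_of_E_derivation_is_MS {K : Type*} [Field K] [CharZero K]
    (φ : Polynomial K →ₐ[K] Polynomial K) :
    IsMathieuSubspace (LinearMap.range
      ((LinearMap.id : Polynomial K →ₗ[K] Polynomial K) - φ.toLinearMap)) := by
  classical
  intro a b ha
  set V := LinearMap.range ((LinearMap.id : Polynomial K →ₗ[K] Polynomial K) - φ.toLinearMap)
    with hV
  set p : Polynomial K := φ X with hp
  have hφ : ∀ f : Polynomial K, φ f = f.comp p := by
    intro f
    have h1 : φ = aeval p := Polynomial.algHom_ext (by rw [aeval_X])
    rw [h1, aeval_def, Polynomial.algebraMap_eq]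
    rfl
  have hmem : ∀ g : Polynomial K, g ∈ V ↔ ∃ f : Polynomial K, f - f.comp p = g := by
    intro g
    rw [hV, LinearMap.mem_range]
    constructor
    · rintro ⟨f, hf⟩
      refine ⟨f, ?_⟩
      rw [← hf, LinearMap.sub_apply, LinearMap.id_apply, AlgHom.toLinearMap_apply, hφ f]
    · rintro ⟨f, hf⟩
      refine ⟨f, ?_⟩
      rw [LinearMap.sub_apply, LinearMap.id_apply, AlgHom.toLinearMap_apply, hφ f, hf]
  have ha' : ∀ m : ℕ, 1 ≤ m → ∃ f : Polynomial K, a ^ m = f - f.comp p := by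
    intro m hm
    obtain ⟨f, hf⟩ := (hmem _).1 (ha m hm)
    exact ⟨f, hf.symm⟩
  have hzero : a = 0 → ∃ N : ℕ, ∀ m : ℕ, N ≤ m → a ^ m * b ∈ V := by
    intro h0
    refine ⟨1, fun m hm => ?_⟩
    rw [h0, zero_pow (by omega : m ≠ 0), zero_mul]
    exact V.zero_mem
  by_cases hdeg2 : 2 ≤ p.natDegree
  · exact hzero (caseB p hdeg2 a ha')
  · -- natDegree p ≤ 1
    set α := p.coeff 1 with hα
    set β := p.coeff 0 with hβ
    have hpeq : p = C α * X + C β := eq_X_add_C_of_natDegree_le_one (by omega)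
    by_cases hα0 : α = 0
    · -- constant case
      have hpC : p = C β := by rw [hpeq, hα0]; simp
      have hev : a.eval β = 0 := by
        obtain ⟨f, hf⟩ := (hmem (a ^ 1)).1 (ha 1 le_rfl)
        rw [pow_one] at hf
        rw [← hf, hpC, comp_C]
        simp
      refine ⟨1, fun m hm => ?_⟩
      refine (hmem _).2 ⟨a ^ m * b, ?_⟩
      rw [hpC, comp_C]
      have : (a ^ m * b).eval β = 0 := by
        rw [eval_mul, eval_pow, hev, zero_pow (by omega : m ≠ 0), zero_mul]
      rw [this]
      simp
    · by_cases hα1 : α = 1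
      · by_cases hβ0 : β = 0
        · -- p = X
          have hpX : pk p 1 = X := by
            rw [pk_succ, pk_zero, comp_X, hpeq, hα1, hβ0]; simp
          exact hzero (caseA p 1 le_rfl hpX a ha')
        · -- p = X + C β, β ≠ 0 : V = everything
          have hpXβ : p = X + C β := by rw [hpeq, hα1]; simp
          set u : ℕ → Polynomial K := fun n => X ^ (n+1) - (X + C β) ^ (n+1) with hu
          have hucoeff_hi : ∀ n j : ℕ, n < j → (u n).coeff j = 0 := by
            intro n j hj
            rw [hu]
            simp only [coeff_sub, coeff_X_pow, coeff_X_add_C_pow]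
            by_cases hje : j = n + 1
            · subst hje; simp
            · have hlt : n + 1 < j := by omega
              rw [if_neg (by omega), Nat.choose_eq_zero_of_lt hlt]
              simp
          have hucoeff_n : ∀ n : ℕ, (u n).coeff n = -(((n:K)+1) * β) := by
            intro n
            rw [hu]
            simp only [coeff_sub, coeff_X_pow, coeff_X_add_C_pow]
            rw [if_neg (show ¬ n = n + 1 by omega)]
            have h2 : n + 1 - n = 1 := by omega
            rw [h2, pow_one, Nat.choose_succ_self_right]
            push_cast
            ring
          have hune : ∀ n, u n ≠ 0 := by
            intro n h0
            have := hucoeff_n n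
            rw [h0, coeff_zero] at this
            have hne : ((n:K)+1) * β ≠ 0 := mul_ne_zero (Nat.cast_add_one_ne_zero n) hβ0
            exact hne (neg_eq_zero.1 this.symm)
          have hudeg : ∀ n, (u n).natDegree = n := by
            intro n
            have hle : (u n).natDegree ≤ n :=
              natDegree_le_iff_coeff_eq_zero.2 fun j hj => hucoeff_hi n j hj
            have hge : n ≤ (u n).natDegree := le_natDegree_of_ne_zero (by
              rw [hucoeff_n n]
              intro h0
              have hne : ((n:K)+1) * β ≠ 0 := mul_ne_zero (Nat.cast_add_one_ne_zero n) hβ0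
              exact hne (neg_eq_zero.1 h0))
            omega
          have humem : ∀ n, u n ∈ V := by
            intro n
            refine (hmem _).2 ⟨X ^ (n+1), ?_⟩
            rw [X_pow_comp, hpXβ, hu]
          have hall := span_all V u humem hune hudeg
          exact ⟨1, fun m _ => hall _⟩
      · -- α ≠ 0, 1 : affine with fixed point c
        have h1α : (1:K) - α ≠ 0 := sub_ne_zero.2 (Ne.symm hα1)
        set c := β / (1 - α) with hc
        have hcc : α * c + β = c := by
          rw [hc, div_eq_mul_inv]
          linear_combination (-β) * mul_inv_cancel₀ h1α
        have hβc : β = c - α * c := by linear_combination hcc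
        have hpc : p = C α * (X - C c) + C c := by
          rw [hpeq, hβc]
          simp only [map_sub, map_mul]
          ring
        have hpc' : p - C c = C α * (X - C c) := by rw [hpc]; ring
        by_cases hroot : ∃ r : ℕ, 1 ≤ r ∧ α ^ r = 1
        · obtain ⟨r, hr1, hr2⟩ := hroot
          have hpkr : pk p r = X := by
            rw [pk_affine α c p hpc r, hr2]
            simp
          exact hzero (caseA p r hr1 hpkr a ha')
        · push_neg at hroot
          have hαn : ∀ n : ℕ, 1 ≤ n → (1:K) - α ^ n ≠ 0 := by
            intro n hn
            exact sub_ne_zero.2 fun h => hroot n hn h.symm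
          have hpow : ∀ n : ℕ, 1 ≤ n → (X - C c) ^ n ∈ V := by
            intro n hn
            refine (hmem _).2 ⟨((1:K) - α ^ n)⁻¹ • (X - C c) ^ n, ?_⟩
            rw [smul_comp, pow_comp, sub_comp, X_comp, C_comp, hpc', mul_pow, ← C_pow]
            have hst : (X - C c) ^ n - C (α ^ n) * (X - C c) ^ n
                = ((1:K) - α ^ n) • (X - C c) ^ n := by
              rw [smul_eq_C_mul, map_sub, map_one]
              ring
            rw [← smul_sub, hst, smul_smul, inv_mul_cancel₀ (hαn n hn), one_smul]
          have hpev : p.eval c = c := by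
            rw [hpc]
            simp
          have hev : a.eval c = 0 := by
            obtain ⟨f, hf⟩ := (hmem (a ^ 1)).1 (ha 1 le_rfl)
            rw [pow_one] at hf
            rw [← hf, eval_sub, eval_comp, hpev, sub_self]
          refine ⟨1, fun m hm => ?_⟩
          refine mem_of_eval_zero V c hpow _ ?_
          rw [eval_mul, eval_pow, hev, zero_pow (by omega : m ≠ 0), zero_mul]
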